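/- If X is a spiny symmetric set of degree at most 2, then X is 2-coskeletal, i.e. the canonical map X → cosk₂ X is an isomorphism. -/

import Mathlib

open CategoryTheory Opposite

/-- The skeleton of the category of finite nonempty sets: objects are natural
numbers `n`, standing for `[n] = {0, …, n}`, morphisms are all functions. -/
def Ups : Type := ℕ

/-- The natural number underlying an object of `Ups`. -/
def Ups.toNat : Ups → ℕ := fun n => n

/-- The object `[n]` of `Ups`. -/
def Ups.of : ℕ → Ups := fun n => n

instance : Category Ups where
  Hom n m := Fin (n.toNat + 1) → Fin (m.toNat + 1)
  id _ := _root_.id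
  comp f g := g ∘ f

/-- A symmetric set is a presheaf on `Ups`. -/
abbrev SymmSet := Upsᵒᵖ ⥤ Type

/-- The map `ε_{ij} : [1] → [n]` sending `0, 1` to `i, j`. -/
def eps (n : ℕ) (i j : Fin (n + 1)) : Ups.of 1 ⟶ Ups.of n :=
  fun k => if k = 0 then i else j

/-- The set of `n`-simplices of a symmetric set. -/
abbrev simp (X : SymmSet) (n : ℕ) : Type := X.obj (op (Ups.of n))

/-- The Bousfield–Segal map `𝓑ₙ : Xₙ → X₁ⁿ`, `x ↦ (ε₀₁*x, …, ε₀ₙ*x)`. -/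
def BS (X : SymmSet) (n : ℕ) (x : simp X n) : Fin n → simp X 1 :=
  fun k => X.map (eps n 0 k.succ).op x

/-- The Segal map `𝓔ₙ : Xₙ → X₁ⁿ`, `x ↦ (ε₀₁*x, ε₁₂*x, …, ε₍ₙ₋₁₎ₙ*x)`. -/
def ES (X : SymmSet) (n : ℕ) (x : simp X n) : Fin n → simp X 1 :=
  fun k => X.map (eps n k.castSucc k.succ).op x

/-- The canonical map `μ_X` to matrices, `x ↦ (ε_{ij}* x)_{ij}`. -/
def muMat (X : SymmSet) (n : ℕ) (x : simp X n) :
    Fin (n + 1) → Fin (n + 1) → simp X 1 :=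
  fun i j => X.map (eps n i j).op x

/-- A symmetric set is spiny if all Bousfield–Segal maps are injective. -/
def Spiny (X : SymmSet) : Prop := ∀ n, Function.Injective (BS X n)
/-- The matrix symmetric set `Mat(S)`: `n`-simplices are functions `[n]×[n] → S`. -/
def MatS (S : Type) : SymmSet where
  obj k := Fin (k.unop.toNat + 1) → Fin (k.unop.toNat + 1) → S
  map f := TypeCat.ofHom (fun M => fun a b => M (f.unop a) (f.unop b))
  map_id := by intros; rfl
  map_comp := by intros; rfl

/-- An `n`-simplex is degenerate if it is `ρ* y` for a noninvertible surjection
`ρ : [n] ↠ [m]` and an `m`-simplex `y`. -/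
def Degen (X : SymmSet) (n : ℕ) (x : simp X n) : Prop :=
  ∃ (m : ℕ) (ρ : Ups.of n ⟶ Ups.of m), Function.Surjective ρ ∧
    ¬ Function.Bijective ρ ∧ ∃ y : simp X m, x = X.map ρ.op y

/-- The `d`-skeleton of a symmetric set, as a symmetric subset. -/
def skel (X : SymmSet) (d : ℕ) : SymmSet where
  obj k := {x : X.obj k // ∃ (i : ℕ) (_ : i ≤ d) (α : k.unop ⟶ Ups.of i)
      (y : simp X i), x = X.map α.op y}
  map f := TypeCat.ofHom (fun x => ⟨X.map f x.1, by
    obtain ⟨i, hi, α, y, hy⟩ := x.2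
    refine ⟨i, hi, f.unop ≫ α, y, ?_⟩
    rw [hy, ← FunctorToTypes.map_comp_apply]
    rfl⟩)
  map_id := by
    intro k; ext x
    simp
  map_comp := by
    intro k k' k'' f g; ext x
    simp

/-- A symmetric set is `d`-skeletal when all simplices above dimension `d`
are degenerate. -/
def SkeletalLE (X : SymmSet) (d : ℕ) : Prop :=
  ∀ n, d < n → ∀ x : simp X n, Degen X n x

/-- `X` has dimension `d` when `d` is the least integer such that `X` is
`d`-skeletal. -/
def HasDim (X : SymmSet) (d : ℕ) : Prop :=
  IsLeast {m | SkeletalLE X m} d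

/-- A symmetric set is reduced when it has exactly one `0`-simplex. -/
def Reduced (X : SymmSet) : Prop :=
  Nonempty (simp X 0) ∧ Subsingleton (simp X 0)

/-- A partial group is a reduced spiny symmetric set. -/
def IsPartialGroup (X : SymmSet) : Prop := Reduced X ∧ Spiny X

/-- A partial group is trivial when it has no nonidentity elements. -/
def TrivialPG (X : SymmSet) : Prop := Subsingleton (simp X 1)

/-- The order of a partial group: the number of its elements (edges). -/
noncomputable def orderPG (X : SymmSet) : ℕ := Nat.card (simp X 1)

/-- An edge is an identity if it is in the image of the degeneracy `X₀ → X₁`. -/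
def isIdent (X : SymmSet) (e : simp X 1) : Prop :=
  ∃ v : simp X 0, e = X.map (Quiver.Hom.op
    ((fun _ => 0 : Fin 2 → Fin 1) : Ups.of 1 ⟶ Ups.of 0)) v

/-- The source vertex of an edge. -/
def srcE (X : SymmSet) (e : simp X 1) : simp X 0 :=
  X.map (Quiver.Hom.op ((fun _ => 0 : Fin 1 → Fin 2) : Ups.of 0 ⟶ Ups.of 1)) e

/-- `X` has (higher Segal) degree at most `k`: for each starry word `w` of
length `n+1 ≥ k+1`, if the last `k+1` faces `d_{n+1-k} w, …, d_{n+1} w` of `w`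
are Bousfield–Segal images of simplices, then so is `w`. -/
def HasDegLE (X : SymmSet) (k : ℕ) : Prop :=
  ∀ n, k ≤ n → ∀ w : Fin (n + 1) → simp X 1,
    (∀ a b, srcE X (w a) = srcE X (w b)) →
    (∀ i : Fin (n + 1), n ≤ (i : ℕ) + k →
      (fun j : Fin n => w (i.succAbove j)) ∈ Set.range (BS X n)) →
    w ∈ Set.range (BS X (n + 1))

/-- `X` has degree `d`: `d` is the least `k ≥ 1` with `HasDegLE X k`. -/
def DegreeIs (X : SymmSet) (d : ℕ) : Prop :=
  IsLeast {k | 1 ≤ k ∧ HasDegLE X k} d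

/-- `W`, with structure maps `i, j`, is a coproduct of `Y` and `Z` in the
category of partial groups. -/
def IsPGCoproduct (W Y Z : SymmSet) (i : Y ⟶ W) (j : Z ⟶ W) : Prop :=
  ∀ V : SymmSet, IsPartialGroup V → ∀ (f : Y ⟶ V) (g : Z ⟶ V),
    ∃! h : W ⟶ V, i ≫ h = f ∧ j ≫ h = g

/-- The nerve of a group `G`, as a symmetric set: an `n`-simplex is a matrix
`(g_{ij})` of elements of `G` satisfying the cocycle condition. -/
def grpNerve (G : Type) [Group G] : SymmSet where
  obj k := {M : Fin (k.unop.toNat + 1) → Fin (k.unop.toNat + 1) → G //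
      ∀ i j l, M i j * M j l = M i l}
  map f := TypeCat.ofHom (fun M => ⟨fun a b => M.1 (f.unop a) (f.unop b),
    fun i j l => M.2 (f.unop i) (f.unop j) (f.unop l)⟩)
  map_id := by intro k; ext M; rfl
  map_comp := by intros; ext M; rfl

/-- The full subcategory `Υ_{≤ n}` of `Ups` on the objects `[0], …, [n]`. -/
abbrev UpsLE (n : ℕ) := CategoryTheory.ObjectProperty.FullSubcategory (fun k : Ups => k.toNat ≤ n)

/-- The inclusion `Υ_{≤ n} → Υ`. -/
abbrev upsIncl (n : ℕ) : UpsLE n ⥤ Ups := ObjectProperty.ι _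

/-- The `n`-coskeleton of a symmetric set: the right Kan extension of the
restriction of `X` to `Υ_{≤ n}` along the inclusion. -/
noncomputable def cosk (n : ℕ) (X : SymmSet) : SymmSet :=
  ((upsIncl n).op.ran).obj ((upsIncl n).op ⋙ X)

/-- The canonical (unit) map `X ⟶ cosk_n X`. -/
noncomputable def coskUnit (n : ℕ) (X : SymmSet) : X ⟶ cosk n X :=
  (((upsIncl n).op.ranAdjunction (Type)).unit).app X

namespace TwoCoskAux

lemma comp_app {a b c : Ups} (f : a ⟶ b) (g : b ⟶ c) (x : Fin (a.toNat + 1)) :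
    (f ≫ g) x = g (f x) := rfl

lemma map_op_comp (X : SymmSet) {a b c : Ups} (f : a ⟶ b) (g : b ⟶ c) (z : X.obj (op c)) :
    X.map (f ≫ g).op z = X.map f.op (X.map g.op z) :=
  FunctorToTypes.map_comp_apply X g.op f.op z

lemma sub0 (X : SymmSet) (hX : Spiny X) (x y : simp X 0) : x = y :=
  hX 0 (funext fun j => j.elim0)

lemma BS2_eq (X : SymmSet) (hX : Spiny X) {z z' : simp X 2}
    (e1 : X.map (eps 2 0 1).op z = X.map (eps 2 0 1).op z')
    (e2 : X.map (eps 2 0 2).op z = X.map (eps 2 0 2).op z') : z = z' := by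
  apply hX 2
  funext t
  fin_cases t
  · exact e1
  · exact e2

/-- Compatibility for a family of low-dimensional simplices over `[n]`. -/
def Compat (X : SymmSet) {n : ℕ}
    (s : ∀ (k : ℕ), k ≤ 2 → (Ups.of k ⟶ Ups.of n) → simp X k) : Prop :=
  ∀ (k : ℕ) (hk : k ≤ 2) (k' : ℕ) (hk' : k' ≤ 2) (β : Ups.of k' ⟶ Ups.of k)
    (α : Ups.of k ⟶ Ups.of n), X.map β.op (s k hk α) = s k' hk' (β ≫ α)

lemma exists_match (X : SymmSet) (hX : Spiny X) (hdeg : HasDegLE X 2) :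
    ∀ (n : ℕ) (s : ∀ k, k ≤ 2 → (Ups.of k ⟶ Ups.of n) → simp X k), Compat X s →
      ∃ x : simp X n, ∀ k hk α, X.map α.op x = s k hk α := by
  intro n
  induction n using Nat.strong_induction_on with
  | _ n IH =>
    intro s hs
    by_cases hn : n ≤ 2
    · exact ⟨s n hn (𝟙 _), fun k hk α => by
        rw [hs n hn k hk α (𝟙 _), Category.comp_id]⟩
    · push_neg at hn
      obtain ⟨m, rfl⟩ : ∃ m, n = m + 1 := ⟨n - 1, by omega⟩
      have hm : 2 ≤ m := by omega
      have h1 : (1:ℕ) ≤ 2 := by omega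
      have h2 : (2:ℕ) ≤ 2 := le_refl 2
      have h0 : (0:ℕ) ≤ 2 := by omega
      set w : Fin (m+1) → simp X 1 := fun j => s 1 h1 (eps (m+1) 0 j.succ) with hw
      have hface : ∀ i : Fin (m + 1),
          (fun j : Fin m => w (i.succAbove j)) ∈ Set.range (BS X m) := by
        intro i
        set δ : Ups.of m ⟶ Ups.of (m+1) := fun a => Fin.succAbove i.succ a with hδ
        obtain ⟨y, hy⟩ := IH m (by omega) (fun k hk α => s k hk (α ≫ δ))
          (fun k hk k' hk' β α => by
            rw [hs k hk k' hk' β (α ≫ δ)]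
            exact congrArg (s k' hk') (Category.assoc β α δ).symm)
        refine ⟨y, ?_⟩
        funext j
        show X.map (eps m 0 j.succ).op y = w (i.succAbove j)
        rw [hy 1 h1 (eps m 0 j.succ), hw]
        congr 1
        funext a
        show δ (eps m 0 j.succ a) = eps (m+1) 0 (i.succAbove j).succ a
        by_cases ha : a = 0
        · subst ha; simp [eps, hδ]; exact Fin.succ_succAbove_zero i
        · simp [eps, ha, hδ, Fin.succ_succAbove_succ]; exact Fin.succ_succAbove_succ i j
      obtain ⟨x, hx⟩ := hdeg m hm w (fun a b => sub0 X hX _ _) (fun i _ => hface i)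
      have hA : ∀ j : Fin (m + 2), X.map (eps (m+1) 0 j).op x = s 1 h1 (eps (m+1) 0 j) := by
        intro j
        rcases Fin.eq_zero_or_eq_succ j with rfl | ⟨t, rfl⟩
        · set c : Ups.of 1 ⟶ Ups.of 0 := (fun _ => 0 : Fin 2 → Fin 1) with hc
          set v : Ups.of 0 ⟶ Ups.of (m+1) := (fun _ => 0 : Fin 1 → Fin (m+2)) with hv
          have hfac : eps (m+1) 0 0 = c ≫ v := by
            funext a
            simp [eps, hc, hv, comp_app]
            exact (ite_self _).trans rfl
          have e0 : X.map v.op x = s 0 h0 v := sub0 X hX _ _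
          rw [hfac, map_op_comp, e0, hs 0 h0 1 h1 c v]
        · exact congrFun hx t
      have hB : ∀ α : Ups.of 1 ⟶ Ups.of (m+1), X.map α.op x = s 1 h1 α := by
        intro α
        set β : Ups.of 2 ⟶ Ups.of (m+1) :=
          (fun a => if a = 0 then 0 else if a = 1 then α 0 else α 1) with hβ
        have c1 : eps 2 0 1 ≫ β = eps (m+1) 0 (α 0) := by
          funext a; fin_cases a <;> rfl
        have c2 : eps 2 0 2 ≫ β = eps (m+1) 0 (α 1) := by
          funext a; fin_cases a <;> rfl
        have c3 : eps 2 1 2 ≫ β = α := by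
          funext a; fin_cases a <;> rfl
        have hz : X.map β.op x = s 2 h2 β := by
          apply BS2_eq X hX
          · rw [← map_op_comp, hs 2 h2 1 h1 (eps 2 0 1) β, c1]; exact hA (α 0)
          · rw [← map_op_comp, hs 2 h2 1 h1 (eps 2 0 2) β, c2]; exact hA (α 1)
        calc X.map α.op x = X.map (eps 2 1 2 ≫ β).op x := by rw [c3]
        _ = X.map (eps 2 1 2).op (X.map β.op x) := map_op_comp X _ _ _
        _ = X.map (eps 2 1 2).op (s 2 h2 β) := by rw [hz]
        _ = s 1 h1 (eps 2 1 2 ≫ β) := hs 2 h2 1 h1 _ β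
        _ = s 1 h1 α := by rw [c3]
      have hC : ∀ α : Ups.of 2 ⟶ Ups.of (m+1), X.map α.op x = s 2 h2 α := by
        intro α
        apply BS2_eq X hX
        · rw [← map_op_comp, hs 2 h2 1 h1 (eps 2 0 1) α]; exact hB _
        · rw [← map_op_comp, hs 2 h2 1 h1 (eps 2 0 2) α]; exact hB _
      refine ⟨x, fun k hk α => ?_⟩
      interval_cases k
      · exact sub0 X hX _ _
      · exact hB α
      · exact hC α

end TwoCoskAux

/-- A spiny symmetric set of degree at most 2 is 2-coskeletal: the canonical
map `X ⟶ cosk₂ X` is an isomorphism. -/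
theorem twoCoskeletal_of_degree_le_two (X : SymmSet) (hX : Spiny X)
    (hdeg : HasDegLE X 2) : IsIso (coskUnit 2 X) := by
  have key : (Functor.RightExtension.mk X
      (𝟙 ((upsIncl 2).op ⋙ X))).IsPointwiseRightKanExtension := by
    intro Y
    apply Nonempty.some
    show Nonempty (Limits.IsLimit ((Functor.RightExtension.mk X
      (𝟙 ((upsIncl 2).op ⋙ X))).coneAt Y))
    rw [Limits.Types.isLimit_iff]
    intro sec hsec
    obtain ⟨x, hxs⟩ := TwoCoskAux.exists_match X hX hdeg (Ups.toNat Y.unop)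
      (fun k hk α =>
        sec (StructuredArrow.mk (Y := op (⟨Ups.of k, hk⟩ : UpsLE 2)) (α.op : Y ⟶ _)))
      (by
        intro k hk k' hk' β α
        exact hsec ((StructuredArrow.homMk
          ((ObjectProperty.homMk β : (⟨Ups.of k', hk'⟩ : UpsLE 2) ⟶ ⟨Ups.of k, hk⟩).op) rfl :
          (StructuredArrow.mk (T := (upsIncl 2).op)
              (Y := op (⟨Ups.of k, hk⟩ : UpsLE 2)) (α.op : Y ⟶ _)) ⟶
            (StructuredArrow.mk (T := (upsIncl 2).op)
              (Y := op (⟨Ups.of k', hk'⟩ : UpsLE 2)) (((β ≫ α).op : Y ⟶ _))))))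
    refine ⟨x, fun g => ?_, fun y hy => ?_⟩
    · exact hxs (Ups.toNat g.right.unop.obj) g.right.unop.property g.hom.unop
    · apply hX (Ups.toNat Y.unop)
      funext t
      have hy1 := hy (StructuredArrow.mk
        (Y := op (⟨Ups.of 1, by decide⟩ : UpsLE 2))
        (((eps (Ups.toNat Y.unop) 0 t.succ).op : Y ⟶ _)))
      have hx1 := hxs 1 (by omega) (eps (Ups.toNat Y.unop) 0 t.succ)
      exact hy1.trans hx1.symm
  have hrke : X.IsRightKanExtension (𝟙 ((upsIncl 2).op ⋙ X)) :=
    key.isRightKanExtension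
  show IsIso (((upsIncl 2).op.ranAdjunction Type).unit.app X)
  rw [Functor.isIso_ranAdjunction_unit_app_iff]
  exact hrke
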